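/- Let m(t) = (u(t), v(t), w(t)) be a C¹ unit vector field (u² + v² + w² = 1) satisfying the Landau–Lifshitz–Gilbert equations (α²+1) m' = α m × (m × h) − α m × j − m × h − m × (m × j) with h = (0,0,h₃ − λ w), j = (0,0,j₃), together with w' = 0, where α ≠ 0, j₃ ≠ 0, h₃ ≠ 0 are constants and λ ∈ ℝ. If w is not constantly 1 and not constantly −1, i.e. if u² + v² is nonzero at some point, then α λ w(t) = α h₃ − j₃ for all t (at any point where u(t)² + v(t)² ≠ 0). -/
import Mathlib


open Matrix

/-- For a C¹ unit-vector solution m = (u,v,w) of the Landau–Lifshitz–Gilbert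
equations with h = (0,0,h₃ - λw), j = (0,0,j₃), w' = 0 and constants
α ≠ 0, j₃ ≠ 0, h₃ ≠ 0: at every point where u² + v² ≠ 0 the generic equation
α λ w = α h₃ - j₃ holds. -/
theorem llg_generic_equation (α lam h₃ j₃ : ℝ)
    (hα : α ≠ 0) (hj : j₃ ≠ 0) (hh : h₃ ≠ 0)
    (u v w : ℝ → ℝ)
    (hu : ContDiff ℝ 1 u) (hv : ContDiff ℝ 1 v) (hw : ContDiff ℝ 1 w)
    (hunit : ∀ t, (u t) ^ 2 + (v t) ^ 2 + (w t) ^ 2 = 1)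
    (hw' : ∀ t, deriv w t = 0)
    (hLLG : ∀ t,
      (α ^ 2 + 1) • (![deriv u t, deriv v t, deriv w t] : Fin 3 → ℝ)
        = α • crossProduct ![u t, v t, w t]
            (crossProduct ![u t, v t, w t] ![0, 0, h₃ - lam * w t])
          - α • crossProduct ![u t, v t, w t] ![0, 0, j₃]
          - crossProduct ![u t, v t, w t] ![0, 0, h₃ - lam * w t]
          - crossProduct ![u t, v t, w t]
              (crossProduct ![u t, v t, w t] ![0, 0, j₃])) :
    ∀ t, (u t) ^ 2 + (v t) ^ 2 ≠ 0 → α * lam * w t = α * h₃ - j₃ := by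
  intro t ht
  have h := congrFun (hLLG t) 2
  simp [crossProduct, hw' t, Matrix.smul_cons] at h
  have h2 : (u t ^ 2 + v t ^ 2) * (α * (h₃ - lam * w t) - j₃) = 0 := by ring_nf; ring_nf at h; linarith
  have := (mul_eq_zero.mp h2).resolve_left ht
  linarith
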